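/- Let h : [0, w_l] → ℝ be twice continuously differentiable with h(w) > 0 and h′(w) < 0 for all w ∈ [0, w_l], satisfying λh(w) = (μw − c)h′(w) + (1/2)σ²w²h″(w) for all w ∈ [0, w_l], with h(0) = 1 and h(w_l)/h′(w_l) = −(1/d)·(c/r − w_l). Then for every w ∈ [0, w_l], the function α ↦ (μ−r)α·h′(w) + (1/2)σ²α²·h″(w) attains its minimum over the interval [0, w] at α = w; equivalently, (μ−r)h′(w) + σ²w·h″(w) ≤ 0 for all w ∈ [0, w_l]. -/

import Mathlib

set_option maxHeartbeats 1000000 in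
private lemma stmt_7_quadmin (mu r s2 w a A B : ℝ) (hmr : 0 < mu - r) (hs2 : 0 < s2)
    (hA : A < 0)
    (hF : (mu - r)*A + s2*w*B ≤ 0)
    (ha0 : 0 ≤ a) (haw : a ≤ w) :
    (mu - r) * w * A + (1/2)*s2*w^2*B ≤ (mu - r)*a*A + (1/2)*s2*a^2*B := by
  rcases le_or_gt 0 B with hc | hc
  · nlinarith [mul_nonpos_of_nonneg_of_nonpos (sub_nonneg.mpr haw) hF,
      mul_nonneg (mul_nonneg hs2.le hc) (sq_nonneg (w-a)), ha0]
  · have h8 : a^2 ≤ w^2 := by nlinarith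
    have h9 : (w-a)*(mu-r)*A ≤ 0 := by
      apply mul_nonpos_of_nonneg_of_nonpos
      · exact mul_nonneg (by linarith) hmr.le
      · exact hA.le
    nlinarith [h9, mul_nonpos_of_nonneg_of_nonpos (mul_nonneg (sub_nonneg.mpr h8) hs2.le) hc.le]

set_option maxHeartbeats 1000000 in
theorem stmt_7 (r mu sigma lam c m d x wl : ℝ)
    (hr : 0 < r) (hmu : r < mu) (hs : 0 < sigma) (hlam : 0 < lam) (hc : 0 < c)
    (hm : m = (mu - r)^2 / (2 * sigma^2))
    (hd : d = ((r + lam + m) + Real.sqrt ((r + lam + m)^2 - 4*r*lam)) / (2*r))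
    (hx : x = (mu - r) / (sigma^2 * (d - 1)))
    (hwl : wl = (x / (1 + x)) * (c / r))
    (h : ℝ → ℝ)
    (hC2 : ContDiffOn ℝ 2 h (Set.Icc 0 wl))
    (hpos : ∀ w ∈ Set.Icc 0 wl, 0 < h w)
    (hneg : ∀ w ∈ Set.Icc 0 wl, deriv h w < 0)
    (hode : ∀ w ∈ Set.Icc 0 wl,
      lam * h w = (mu * w - c) * deriv h w + (1/2) * sigma^2 * w^2 * deriv (deriv h) w)
    (h0 : h 0 = 1)
    (hbd : h wl / deriv h wl = -(1/d) * (c/r - wl)) :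
    ∀ w ∈ Set.Icc 0 wl,
      IsMinOn (fun α : ℝ => (mu - r) * α * deriv h w + (1/2) * sigma^2 * α^2 * deriv (deriv h) w)
        (Set.Icc 0 w) w ∧
      (mu - r) * deriv h w + sigma^2 * w * deriv (deriv h) w ≤ 0 := by
  have hs2 : (0:ℝ) < sigma^2 := by positivity
  have hmr : 0 < mu - r := by linarith
  have hm0 : 0 < m := by rw [hm]; positivity
  have hΔ : 0 ≤ (r + lam + m)^2 - 4*r*lam := by nlinarith [sq_nonneg (r - lam), sq_nonneg m]
  have hsqrt : Real.sqrt ((r + lam + m)^2 - 4*r*lam) = 2*r*d - (r + lam + m) := by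
    rw [hd]; field_simp; ring
  have hquad : r*d^2 - (r + lam + m)*d + lam = 0 := by
    have h1 : (2*r*d - (r + lam + m))^2 = (r + lam + m)^2 - 4*r*lam := by
      rw [← hsqrt]; exact Real.sq_sqrt hΔ
    nlinarith [h1]
  have hsnn : 0 ≤ 2*r*d - (r + lam + m) := by
    rw [← hsqrt]; exact Real.sqrt_nonneg _
  have hd1 : 1 < d := by
    by_contra hle
    push_neg at hle
    have h5 : 0 ≤ (1-d)*(r*(1+d)-(r+lam+m)) := by
      apply mul_nonneg (by linarith)
      nlinarith [hsnn]
    nlinarith [h5, hquad, hm0]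
  have hsd : sigma^2*(d-1) ≠ 0 := by
    have : 0 < sigma^2*(d-1) := by nlinarith
    exact ne_of_gt this
  have hd0 : 0 < d := by linarith
  have hx0 : 0 < x := by
    rw [hx]; apply div_pos hmr; nlinarith
  have h1x : (0:ℝ) < 1 + x := by linarith
  have hwl0 : 0 < wl := by
    rw [hwl]; positivity
  have hx' : sigma^2*(d-1)*x = mu - r := by
    rw [hx, mul_div_cancel₀ _ hsd]
  have hm' : 2*sigma^2*m = (mu-r)^2 := by rw [hm]; field_simp
  have hxm : (d-1)*x*(mu-r) = 2*m := by
    have h2 : sigma^2*((d-1)*x*(mu-r)) = sigma^2*(2*m) := by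
      linear_combination (mu-r)*hx' - hm'
    exact mul_left_cancel₀ (ne_of_gt hs2) h2
  have hwl' : r*(1+x)*wl = x*c := by
    rw [hwl]; field_simp
  have hxy : x*(c - r*wl) = r*wl := by linear_combination (-1)*hwl'
  have hy : 0 < c - r*wl := by
    by_contra hle
    push_neg at hle
    nlinarith [mul_nonpos_of_nonneg_of_nonpos hx0.le hle, hxy, mul_pos hr hwl0]
  have key1 : r*d*(2*c-(mu+r)*wl) = 2*lam*(c-r*wl) := by
    have h1 : (1+x)*(d-1)*(r*d*(2*c-(mu+r)*wl) - 2*lam*(c-r*wl)) = 0 := by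
      linear_combination (2*c)*hquad - (c*d)*hxm + ((d-1)*(2*lam - d*(mu+r)))*hwl'
    have h2 : (1+x)*(d-1) ≠ 0 := ne_of_gt (mul_pos h1x (by linarith))
    rcases mul_eq_zero.mp h1 with h3 | h3
    · exact absurd h3 h2
    · linarith
  have hPwl : 0 < 2*c - (mu+r)*wl := by
    nlinarith [key1, mul_pos hr hd0, mul_pos hlam hy]
  have hlrd : lam < r*d := by nlinarith [hquad, hm0, hd1]
  have hQwl : (2*lam-(mu+r))*sigma^2*wl + (2*c-(mu+r)*wl)*(r-mu) < 0 := by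
    have hD : r*d*((2*lam-(mu+r))*sigma^2*wl + (2*c-(mu+r)*wl)*(r-mu))
        = sigma^2*r*wl*(2*lam - d*(mu+r)) := by
      linear_combination (r-mu)*key1 + 2*lam*(c-r*wl)*hx' - 2*lam*sigma^2*(d-1)*hxy
    have h4 : 2*lam - d*(mu+r) < 0 := by nlinarith [hlrd, hd0]
    nlinarith [hD, mul_pos hr hd0, mul_pos (mul_pos hs2 hr) hwl0]
  have hP : ∀ w ∈ Set.Icc (0:ℝ) wl, 0 < 2*c - (mu+r)*w := by
    intro w hw
    have : (mu+r)*w ≤ (mu+r)*wl := mul_le_mul_of_nonneg_left hw.2 (by linarith)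
    linarith [hPwl]
  have hQ : ∀ w, 0 < w → w ≤ wl → (2*lam-(mu+r))*sigma^2*w + (2*c-(mu+r)*w)*(r-mu) < 0 := by
    intro w hw0 hwle
    have h7 : ((2*lam-(mu+r))*sigma^2*w + (2*c-(mu+r)*w)*(r-mu))*wl
        = ((2*lam-(mu+r))*sigma^2*wl + (2*c-(mu+r)*wl)*(r-mu))*w + 2*c*(r-mu)*(wl-w) := by
      ring
    have h8 : ((2*lam-(mu+r))*sigma^2*wl + (2*c-(mu+r)*wl)*(r-mu))*w < 0 :=
      mul_neg_of_neg_of_pos hQwl hw0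
    have h9 : 2*c*(r-mu)*(wl-w) ≤ 0 := by
      apply mul_nonpos_of_nonpos_of_nonneg
      · nlinarith
      · linarith
    by_contra hge
    push_neg at hge
    have h10 := mul_nonneg hge hwl0.le
    linarith [h7, h8, h9, h10]
  -- analytic part
  have huD : UniqueDiffOn ℝ (Set.Icc (0:ℝ) wl) := uniqueDiffOn_Icc hwl0
  have hdiffAt : ∀ w ∈ Set.Icc (0:ℝ) wl, DifferentiableAt ℝ h w := by
    intro w hw
    by_contra hnd
    exact (hneg w hw).ne (deriv_zero_of_not_differentiableAt hnd)
  have hDeq : Set.EqOn (derivWithin h (Set.Icc 0 wl)) (deriv h) (Set.Icc (0:ℝ) wl) :=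
    fun w hw => (hdiffAt w hw).derivWithin (huD w hw)
  have hcontD : ContinuousOn (derivWithin h (Set.Icc 0 wl)) (Set.Icc (0:ℝ) wl) :=
    hC2.continuousOn_derivWithin huD (by norm_num)
  have hcderiv : ContinuousOn (deriv h) (Set.Icc (0:ℝ) wl) :=
    hcontD.congr fun w hw => (hDeq hw).symm
  have hconth : ContinuousOn h (Set.Icc (0:ℝ) wl) := hC2.continuousOn
  set G : ℝ → ℝ := fun u => 2*lam*h u + (2*c - (mu+r)*u)*deriv h u with hGdef
  have hGcont : ContinuousOn G (Set.Icc (0:ℝ) wl) := by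
    apply ContinuousOn.add
    · exact continuousOn_const.mul hconth
    · exact (continuousOn_const.sub (continuousOn_const.mul continuousOn_id)).mul hcderiv
  have hwlmem : wl ∈ Set.Icc (0:ℝ) wl := ⟨hwl0.le, le_refl wl⟩
  have hGwl : G wl = 0 := by
    have hne : deriv h wl ≠ 0 := (hneg wl hwlmem).ne
    rw [div_eq_iff hne] at hbd
    have h6 : r*d*(G wl) = (deriv h wl) * (r*d*(2*c-(mu+r)*wl) - 2*lam*(c - r*wl)) := by
      have hGwl' : G wl = 2*lam*(h wl) + (2*c-(mu+r)*wl)*deriv h wl := rfl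
      rw [hGwl', hbd]
      field_simp
      ring
    rw [key1] at h6
    simp only [sub_self, mul_zero] at h6
    have hrd : r*d ≠ 0 := ne_of_gt (mul_pos hr hd0)
    rcases mul_eq_zero.mp h6 with h7 | h7
    · exact absurd h7 hrd
    · exact h7
  -- derivative of G on the interior
  have hd2 : ContDiffOn ℝ 1 (deriv h) (Set.Ioo (0:ℝ) wl) :=
    (hC2.mono Set.Ioo_subset_Icc_self).deriv_of_isOpen isOpen_Ioo (by norm_num)
  have hGd : ∀ w ∈ Set.Ioo (0:ℝ) wl, HasDerivAt G
      (2*lam*deriv h w + ((-(mu+r))*deriv h w + (2*c-(mu+r)*w)*deriv (deriv h) w)) w := by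
    intro w hw
    have h1 : HasDerivAt h (deriv h w) w :=
      (hdiffAt w (Set.Ioo_subset_Icc_self hw)).hasDerivAt
    have h2 : HasDerivAt (deriv h) (deriv (deriv h) w) w :=
      ((hd2.differentiableOn (by norm_num) w hw).differentiableAt
        (isOpen_Ioo.mem_nhds hw)).hasDerivAt
    have h3 : HasDerivAt (fun u : ℝ => 2*c - (mu+r)*u) (-(mu+r)) w := by
      simpa using (((hasDerivAt_id w).const_mul (mu+r)).const_sub (2*c))
    have h4 := (h1.const_mul (2*lam)).add (h3.mul h2)
    exact h4
  have hEpos : ∀ w ∈ Set.Ioo (0:ℝ) wl, 0 < G w → 0 < deriv G w := by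
    intro w hw hGw
    rw [(hGd w hw).deriv]
    have hwIcc : w ∈ Set.Icc (0:ℝ) wl := Set.Ioo_subset_Icc_self hw
    have ho := hode w hwIcc
    have hw0 : 0 < w := hw.1
    have hQw := hQ w hw0 hw.2.le
    have hPw := hP w hwIcc
    have hhw : deriv h w < 0 := hneg w hwIcc
    have hid : sigma^2*w^2*(2*lam*deriv h w + ((-(mu+r))*deriv h w
          + (2*c-(mu+r)*w)*deriv (deriv h) w))
        = (2*c-(mu+r)*w)*(G w)
          + w*(deriv h w)*((2*lam-(mu+r))*sigma^2*w + (2*c-(mu+r)*w)*(r-mu)) := by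
      have hGw' : G w = 2*lam*h w + (2*c-(mu+r)*w)*deriv h w := rfl
      rw [hGw']
      linear_combination (-2*(2*c-(mu+r)*w))*ho
    have hpos1 : 0 < (2*c-(mu+r)*w)*(G w) := mul_pos hPw hGw
    have hpos2 : 0 < w*(deriv h w)*((2*lam-(mu+r))*sigma^2*w + (2*c-(mu+r)*w)*(r-mu)) := by
      apply mul_pos_of_neg_of_neg _ hQw
      exact mul_neg_of_pos_of_neg hw0 hhw
    by_contra hge
    push_neg at hge
    have hnn : 0 ≤ sigma^2*w^2 := by positivity
    have h12 := mul_nonpos_of_nonneg_of_nonpos hnn hge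
    linarith [hid, hpos1, hpos2, h12]
  -- G ≤ 0 on (0, wl]
  have hGle : ∀ w ∈ Set.Icc (0:ℝ) wl, 0 < w → G w ≤ 0 := by
    intro w hw h0w
    rcases eq_or_lt_of_le hw.2 with hwwl | hwwl
    · rw [hwwl, hGwl]
    · by_contra hpos0
      push_neg at hpos0
      set Z := Set.Icc w wl ∩ G ⁻¹' Set.Iic 0 with hZ
      have hZclosed : IsClosed Z :=
        (hGcont.mono (Set.Icc_subset_Icc hw.1 le_rfl)).preimage_isClosed_of_isClosed
          isClosed_Icc isClosed_Iic
      have hZne : Z.Nonempty := ⟨wl, ⟨hwwl.le, le_rfl⟩, by simp [hGwl]⟩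
      have hZbdd : BddBelow Z := ⟨w, fun u hu => hu.1.1⟩
      set b := sInf Z with hb
      have hbZ : b ∈ Z := hZclosed.csInf_mem hZne hZbdd
      have hbwl : b ≤ wl := hbZ.1.2
      have hwb : w < b := by
        rcases eq_or_lt_of_le hbZ.1.1 with h5 | h5
        · exfalso
          have : G b ≤ 0 := hbZ.2
          rw [← h5] at this
          linarith
        · exact h5
      have hGpos : ∀ u ∈ Set.Ico w b, 0 < G u := by
        intro u hu
        by_contra hle
        push_neg at hle
        have huZ : u ∈ Z := ⟨⟨hu.1, le_trans hu.2.le hbwl⟩, hle⟩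
        exact absurd (csInf_le hZbdd huZ) (not_le.mpr hu.2)
      have hmono : StrictMonoOn G (Set.Icc w b) := by
        apply strictMonoOn_of_deriv_pos (convex_Icc w b)
        · exact hGcont.mono (Set.Icc_subset_Icc hw.1 hbwl)
        · intro u hu
          rw [interior_Icc] at hu
          exact hEpos u ⟨lt_trans h0w hu.1, lt_of_lt_of_le hu.2 hbwl⟩
            (hGpos u ⟨hu.1.le, hu.2⟩)
      have h10 : G w < G b := hmono ⟨le_rfl, hwb.le⟩ ⟨hwb.le, le_rfl⟩ hwb
      have h11 : G b ≤ 0 := hbZ.2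
      linarith
  -- the second conclusion
  have hFle : ∀ w ∈ Set.Icc (0:ℝ) wl,
      (mu - r) * deriv h w + sigma^2*w*deriv (deriv h) w ≤ 0 := by
    intro w hw
    rcases eq_or_lt_of_le hw.1 with h0w | h0w
    · rw [← h0w]
      have h13 := hneg 0 ⟨le_rfl, hwl0.le⟩
      simp only [mul_zero, zero_mul, add_zero]
      exact (mul_neg_of_pos_of_neg hmr h13).le
    · have hGw := hGle w hw h0w
      have ho := hode w hw
      have hFG : ((mu-r)*deriv h w + sigma^2*w*deriv (deriv h) w)*w = G w := by
        have hGw' : G w = 2*lam*h w + (2*c-(mu+r)*w)*deriv h w := rfl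
        rw [hGw']
        linear_combination -2*ho
      by_contra hFpos
      push_neg at hFpos
      linarith [mul_pos hFpos h0w, hFG, hGw]
  intro w hw
  refine ⟨?_, hFle w hw⟩
  rw [isMinOn_iff]
  intro α hα
  show (mu - r) * w * deriv h w + (1/2) * sigma^2 * w^2 * deriv (deriv h) w
      ≤ (mu - r) * α * deriv h w + (1/2) * sigma^2 * α^2 * deriv (deriv h) w
  exact stmt_7_quadmin mu r (sigma^2) w α (deriv h w) (deriv (deriv h) w)
    hmr hs2 (hneg w hw) (hFle w hw) hα.1 hα.2
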